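/- Let S, I be an SIR solution with initial data (x, y), where x ≥ 0 and y ≥ μ. Then the set {t ≥ 0 : I(t) ≤ μ} is nonempty, it has a least element u(x, y), and I(u(x, y)) = μ. -/

import Mathlib

open Set Filter

/-- An SIR solution with parameters β, γ and initial data (x, y):
differentiable functions S, I on [0,∞) with S' = -βSI, I' = βSI - γI,
S(0) = x, I(0) = y. -/
def IsSIRSolution (β γ x y : ℝ) (S I : ℝ → ℝ) : Prop :=
  S 0 = x ∧ I 0 = y ∧
  ∀ t, 0 ≤ t →
    HasDerivWithinAt S (-(β * S t * I t)) (Set.Ici 0) t ∧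
    HasDerivWithinAt I (β * S t * I t - γ * I t) (Set.Ici 0) t

/-- Integrating-factor lemma: if f' = g f on [0,∞) with g continuous, then
f T = f 0 * exp (∫ 0..T g). -/
lemma exp_rep_aux (f g : ℝ → ℝ) (hg : Continuous g)
    (hf : ∀ t ∈ Ici (0:ℝ), HasDerivWithinAt f (g t * f t) (Ici 0) t) :
    ∀ T, 0 ≤ T → f T = f 0 * Real.exp (∫ s in (0:ℝ)..T, g s) := by
  intro T hT
  set G : ℝ → ℝ := fun t => ∫ s in (0:ℝ)..t, g s with hG
  have hGd : ∀ t : ℝ, HasDerivAt G (g t) t := fun t =>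
    intervalIntegral.integral_hasDerivAt_right (hg.intervalIntegrable _ _)
      hg.aestronglyMeasurable.stronglyMeasurableAtFilter hg.continuousAt
  have hfc : ContinuousOn f (Ici 0) := fun t ht => (hf t ht).continuousWithinAt
  set E : ℝ → ℝ := fun t => f t * Real.exp (-G t) with hE
  have hEd : ∀ u ∈ Ico (0:ℝ) T, HasDerivWithinAt E 0 (Ici u) u := by
    intro u hu
    have h1 : HasDerivWithinAt f (g u * f u) (Ici u) u :=
      (hf u hu.1).mono (Ici_subset_Ici.2 hu.1)
    have h2 : HasDerivWithinAt (fun t => Real.exp (-G t)) (Real.exp (-G u) * (-g u)) (Ici u) u :=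
      (((hGd u).hasDerivWithinAt.neg).exp)
    have := h1.mul h2
    exact this.congr_deriv (by ring)
  have hEc : ContinuousOn E (Icc 0 T) :=
    ((hfc.mono Icc_subset_Ici_self).mul
      (((continuous_neg.comp (intervalIntegral.continuous_primitive
        (fun a b => hg.intervalIntegrable a b) 0)).rexp).continuousOn))
  have hconst := constant_of_has_deriv_right_zero hEc hEd T ⟨hT, le_refl T⟩
  have hG0 : G 0 = 0 := by simp [hG]
  have hE0 : E 0 = f 0 := by simp [hE, hG0]
  have hET : f T * Real.exp (-G T) = f 0 := by rw [← hE0]; exact hconst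
  have := congrArg (fun z => z * Real.exp (G T)) hET
  simp only [mul_assoc, ← Real.exp_add, neg_add_cancel, Real.exp_zero, mul_one] at this
  exact this


theorem stmt_2 (β γ μ x y : ℝ) (hβ : 0 < β) (hγ : 0 < γ) (hμ : 0 < μ)
    (hx : 0 ≤ x) (hy : μ ≤ y)
    (S I : ℝ → ℝ) (hSI : IsSIRSolution β γ x y S I) :
    {t : ℝ | 0 ≤ t ∧ I t ≤ μ}.Nonempty ∧
    ∃ u : ℝ, IsLeast {t : ℝ | 0 ≤ t ∧ I t ≤ μ} u ∧ I u = μ := by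
  obtain ⟨hS0, hI0, hD⟩ := hSI
  have hScont : ContinuousOn S (Ici 0) := fun t ht => (hD t ht).1.continuousWithinAt
  have hIcont : ContinuousOn I (Ici 0) := fun t ht => (hD t ht).2.continuousWithinAt
  have hmax : Continuous (fun t : ℝ => max t 0) := continuous_id.max continuous_const
  set Se : ℝ → ℝ := fun t => S (max t 0) with hSe
  set Ie : ℝ → ℝ := fun t => I (max t 0) with hIe
  have hSec : Continuous Se := hScont.comp_continuous hmax (fun t => Set.mem_Ici.2 (le_max_right _ _))
  have hIec : Continuous Ie := hIcont.comp_continuous hmax (fun t => Set.mem_Ici.2 (le_max_right _ _))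
  have hSeq : ∀ t : ℝ, 0 ≤ t → Se t = S t := fun t ht => by
    simp [hSe, max_eq_left ht]
  have hIeq : ∀ t : ℝ, 0 ≤ t → Ie t = I t := fun t ht => by
    simp [hIe, max_eq_left ht]
  -- positivity of I
  have hIrep := exp_rep_aux I (fun t => β * Se t - γ)
    ((continuous_const.mul hSec).sub continuous_const) (by
      intro t ht
      have := (hD t ht).2
      convert this using 1
      simp only [hSeq t ht]; ring)
  have hIpos : ∀ t : ℝ, 0 ≤ t → 0 < I t := by
    intro t ht
    rw [hIrep t ht, hI0]
    exact mul_pos (lt_of_lt_of_le hμ hy) (Real.exp_pos _)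
  -- nonnegativity of S
  have hSrep := exp_rep_aux S (fun t => -(β * Ie t))
    ((continuous_const.mul hIec).neg) (by
      intro t ht
      have := (hD t ht).1
      convert this using 1
      simp only [hIeq t ht]; ring)
  have hSpos : ∀ t : ℝ, 0 ≤ t → 0 ≤ S t := by
    intro t ht
    rw [hSrep t ht, hS0]
    exact mul_nonneg hx (Real.exp_pos _).le
  -- nonempty
  have hne : {t : ℝ | 0 ≤ t ∧ I t ≤ μ}.Nonempty := by
    by_contra hcon
    rw [Set.not_nonempty_iff_eq_empty, Set.eq_empty_iff_forall_notMem] at hcon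
    have hIgt : ∀ t : ℝ, 0 ≤ t → μ < I t := by
      intro t ht
      by_contra hle
      exact hcon t ⟨ht, le_of_not_gt hle⟩
    have hγμ : 0 < γ * μ := mul_pos hγ hμ
    obtain ⟨T, hTpos, hTbig⟩ : ∃ T : ℝ, 0 < T ∧ x + y < γ * μ * T := by
      refine ⟨(x + y) / (γ * μ) + 1, ?_, ?_⟩
      · have h0 : 0 ≤ (x + y) / (γ * μ) := div_nonneg (by linarith) hγμ.le
        linarith
      · rw [mul_add, mul_one, mul_div_cancel₀ _ hγμ.ne']
        linarith
    have hW : ∫ s in (0:ℝ)..T, (-(γ * Ie s))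
        = (fun t => S t + I t) T - (fun t => S t + I t) 0 := by
      apply intervalIntegral.integral_eq_sub_of_hasDeriv_right_of_le
        (f := fun t => S t + I t) hTpos.le
      · exact (hScont.mono Icc_subset_Ici_self).add (hIcont.mono Icc_subset_Ici_self)
      · intro s hs
        have hs0 : (0:ℝ) ≤ s := hs.1.le
        have hmem : Ici (0:ℝ) ∈ nhds s := Ici_mem_nhds hs.1
        have h1 : HasDerivAt S (-(β * S s * I s)) s := ((hD s hs0).1).hasDerivAt hmem
        have h2 : HasDerivAt I (β * S s * I s - γ * I s) s := ((hD s hs0).2).hasDerivAt hmem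
        have := (h1.add h2).hasDerivWithinAt (s := Ioi s)
        convert this using 1
        · rfl
        simp only [hIeq s hs0]; ring
      · exact ((continuous_const.mul hIec).neg).intervalIntegrable _ _
    have hbound : ∫ s in (0:ℝ)..T, (-(γ * Ie s)) ≤ ∫ s in (0:ℝ)..T, (-(γ * μ)) := by
      apply intervalIntegral.integral_mono_on hTpos.le
        ((continuous_const.mul hIec).neg.intervalIntegrable _ _)
        (intervalIntegrable_const)
      intro s hs
      have : μ < Ie s := by rw [hIeq s hs.1]; exact hIgt s hs.1
      show -(γ * Ie s) ≤ -(γ * μ)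
      nlinarith
    rw [intervalIntegral.integral_const, smul_eq_mul, sub_zero, hW] at hbound
    simp only [hS0, hI0] at hbound
    have h1 : 0 < S T + I T := lt_of_lt_of_le (hIpos T hTpos.le)
      (le_add_of_nonneg_left (hSpos T hTpos.le))
    nlinarith
  refine ⟨hne, ?_⟩
  -- least element
  have hAeq : {t : ℝ | 0 ≤ t ∧ I t ≤ μ} = {t : ℝ | 0 ≤ t ∧ Ie t ≤ μ} := by
    ext t
    simp only [Set.mem_setOf_eq]
    constructor
    · rintro ⟨h1, h2⟩; exact ⟨h1, by rwa [hIeq t h1]⟩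
    · rintro ⟨h1, h2⟩; exact ⟨h1, by rwa [hIeq t h1] at h2⟩
  have hclosed : IsClosed {t : ℝ | 0 ≤ t ∧ I t ≤ μ} := by
    rw [hAeq]
    exact (isClosed_le continuous_const continuous_id).inter
      (isClosed_le hIec continuous_const)
  have hbdd : BddBelow {t : ℝ | 0 ≤ t ∧ I t ≤ μ} := ⟨0, fun t ht => ht.1⟩
  set u : ℝ := sInf {t : ℝ | 0 ≤ t ∧ I t ≤ μ} with hu
  have humem : u ∈ {t : ℝ | 0 ≤ t ∧ I t ≤ μ} := hclosed.csInf_mem hne hbdd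
  have hleast : IsLeast {t : ℝ | 0 ≤ t ∧ I t ≤ μ} u :=
    ⟨humem, fun t ht => csInf_le hbdd ht⟩
  refine ⟨u, hleast, ?_⟩
  -- I u = μ via IVT
  have hIVT := intermediate_value_Icc' humem.1 (hIcont.mono (Icc_subset_Ici_self))
  have hμmem : μ ∈ Icc (I u) (I 0) := ⟨humem.2, by rw [hI0]; exact hy⟩
  obtain ⟨c, hc, hcμ⟩ := hIVT hμmem
  have hcA : c ∈ {t : ℝ | 0 ≤ t ∧ I t ≤ μ} := ⟨hc.1, le_of_eq hcμ⟩
  have : u ≤ c := hleast.2 hcA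
  have : c = u := le_antisymm hc.2 this
  rw [← this]; exact hcμ
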